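/- With A_n and B_n as above, B_n(y,q) = \sum_{k=0}^n \binom{n}{k} (-y)^{n-k} A_k(y,q). -/

import Mathlib

open Finset Polynomial
open scoped Classical

noncomputable section
/-- Extension of a permutation of `Fin n` to a function on `ℕ` acting on `{1,…,n}`,
with the conventions `permVal σ 0 = 0` and `permVal σ j = j` for `j > n`. -/
def permVal {n : ℕ} (σ : Equiv.Perm (Fin n)) (j : ℕ) : ℕ :=
  if h : 1 ≤ j ∧ j ≤ n then (σ ⟨j - 1, by omega⟩ : ℕ) + 1 else j

/-- Number of weak exceedances of a permutation of `{1,…,n}`. -/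
def wex {n : ℕ} (σ : Equiv.Perm (Fin n)) : ℕ :=
  ((Finset.Icc 1 n).filter fun i => i ≤ permVal σ i).card

/-- Number of crossings of a permutation of `{1,…,n}`: pairs `(i,j)` with
`i < j ≤ σ(i) < σ(j)` or `σ(i) < σ(j) < i < j`. -/
def cr {n : ℕ} (σ : Equiv.Perm (Fin n)) : ℕ :=
  (((Finset.Icc 1 n) ×ˢ (Finset.Icc 1 n)).filter fun p =>
    (p.1 < p.2 ∧ p.2 ≤ permVal σ p.1 ∧ permVal σ p.1 < permVal σ p.2) ∨
    (permVal σ p.1 < permVal σ p.2 ∧ permVal σ p.2 < p.1 ∧ p.1 < p.2)).card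

/-- `A_n(y,q) = ∑_{σ ∈ S_n} y^{wex σ} q^{cr σ}`. -/
def Apoly (n : ℕ) {R : Type*} [CommRing R] (y q : R) : R :=
  ∑ σ : Equiv.Perm (Fin n), y ^ wex σ * q ^ cr σ

/-- `B_n(y,q) = ∑_{σ ∈ D_n} y^{wex σ} q^{cr σ}`, the sum restricted to derangements. -/
def Bpoly (n : ℕ) {R : Type*} [CommRing R] (y q : R) : R :=
  ∑ σ ∈ Finset.univ.filter (fun σ : Equiv.Perm (Fin n) => ∀ i, σ i ≠ i),
    y ^ wex σ * q ^ cr σ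

namespace Stmt3Aux

variable {n k : ℕ}

/-- lift of `orderEmbOfFin` to `ℕ` with the 1-based convention. -/
def Mmap (s : Finset (Fin n)) (hk : s.card = k) (j : ℕ) : ℕ :=
  if h : 1 ≤ j ∧ j ≤ k then (s.orderEmbOfFin hk ⟨j - 1, by omega⟩ : ℕ) + 1 else j

theorem Mmap_eq (s : Finset (Fin n)) (hk : s.card = k) {j : ℕ} (hj : 1 ≤ j ∧ j ≤ k) :
    Mmap s hk j = (s.orderEmbOfFin hk ⟨j - 1, by omega⟩ : ℕ) + 1 := dif_pos hj

theorem Mmap_mem (s : Finset (Fin n)) (hk : s.card = k) {j : ℕ} (hj : 1 ≤ j ∧ j ≤ k) :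
    1 ≤ Mmap s hk j ∧ Mmap s hk j ≤ n := by
  rw [Mmap_eq s hk hj]
  have := (s.orderEmbOfFin hk ⟨j - 1, by omega⟩).isLt
  omega

theorem Mmap_lt_iff (s : Finset (Fin n)) (hk : s.card = k) {j j' : ℕ}
    (hj : 1 ≤ j ∧ j ≤ k) (hj' : 1 ≤ j' ∧ j' ≤ k) :
    Mmap s hk j < Mmap s hk j' ↔ j < j' := by
  rw [Mmap_eq s hk hj, Mmap_eq s hk hj']
  constructor
  · intro h
    have h2 : (⟨j - 1, by omega⟩ : Fin k) < ⟨j' - 1, by omega⟩ :=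
      (s.orderEmbOfFin hk).lt_iff_lt.1 (by exact_mod_cast (by omega : (s.orderEmbOfFin hk ⟨j - 1, by omega⟩ : ℕ) < (s.orderEmbOfFin hk ⟨j' - 1, by omega⟩ : ℕ)))
    have := (Fin.lt_def.1 h2)
    simp at this
    omega
  · intro h
    have h2 : (⟨j - 1, by omega⟩ : Fin k) < ⟨j' - 1, by omega⟩ := by
      rw [Fin.lt_def]; simp; omega
    have := (s.orderEmbOfFin hk).lt_iff_lt.2 h2
    have := Fin.lt_def.1 this
    omega

theorem Mmap_le_iff (s : Finset (Fin n)) (hk : s.card = k) {j j' : ℕ}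
    (hj : 1 ≤ j ∧ j ≤ k) (hj' : 1 ≤ j' ∧ j' ≤ k) :
    Mmap s hk j ≤ Mmap s hk j' ↔ j ≤ j' := by
  rw [← not_lt, Mmap_lt_iff s hk hj' hj, not_lt]

theorem Mmap_inj (s : Finset (Fin n)) (hk : s.card = k) {j j' : ℕ}
    (hj : 1 ≤ j ∧ j ≤ k) (hj' : 1 ≤ j' ∧ j' ≤ k) (h : Mmap s hk j = Mmap s hk j') :
    j = j' := by
  have h1 := Mmap_lt_iff s hk hj hj'
  have h2 := Mmap_lt_iff s hk hj' hj
  omega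

/-- the predicate "position `i` corresponds to an element of `s`". -/
def Pmem (s : Finset (Fin n)) (i : ℕ) : Prop := ∃ x ∈ s, (x : ℕ) + 1 = i

theorem Pmem_Mmap (s : Finset (Fin n)) (hk : s.card = k) {j : ℕ} (hj : 1 ≤ j ∧ j ≤ k) :
    Pmem s (Mmap s hk j) := by
  rw [Mmap_eq s hk hj]
  exact ⟨_, s.orderEmbOfFin_mem hk _, rfl⟩

theorem exists_Mmap (s : Finset (Fin n)) (hk : s.card = k) {i : ℕ}
    (hP : Pmem s i) : ∃ j, (1 ≤ j ∧ j ≤ k) ∧ Mmap s hk j = i := by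
  obtain ⟨x, hx, hxi⟩ := hP
  have : x ∈ Set.range (s.orderEmbOfFin hk) := by
    rw [s.range_orderEmbOfFin hk]; exact hx
  obtain ⟨j0, hj0⟩ := this
  refine ⟨(j0 : ℕ) + 1, ⟨by omega, by omega⟩, ?_⟩
  rw [Mmap_eq s hk ⟨by omega, by omega⟩]
  have hj0' : (⟨(j0 : ℕ) + 1 - 1, by omega⟩ : Fin k) = j0 := by
    apply Fin.ext; simp
  rw [hj0', hj0, hxi]




def pext (s : Finset (Fin n)) (hk : s.card = k) (δ : Equiv.Perm (Fin k)) : Equiv.Perm (Fin n) :=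
  δ.extendDomain (s.orderIsoOfFin hk).toEquiv

theorem pext_apply_emb (s : Finset (Fin n)) (hk : s.card = k) (δ : Equiv.Perm (Fin k))
    (j0 : Fin k) : pext s hk δ (s.orderEmbOfFin hk j0) = s.orderEmbOfFin hk (δ j0) := by
  have h := Equiv.Perm.extendDomain_apply_image δ (s.orderIsoOfFin hk).toEquiv j0
  simpa [pext, Finset.coe_orderIsoOfFin_apply] using h

theorem pext_apply_not_mem (s : Finset (Fin n)) (hk : s.card = k) (δ : Equiv.Perm (Fin k))
    {x : Fin n} (hx : x ∉ s) : pext s hk δ x = x :=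
  Equiv.Perm.extendDomain_apply_not_subtype δ (s.orderIsoOfFin hk).toEquiv hx

theorem permVal_eq {m : ℕ} (π : Equiv.Perm (Fin m)) {j : ℕ} (hj : 1 ≤ j ∧ j ≤ m) :
    permVal π j = (π ⟨j - 1, by omega⟩ : ℕ) + 1 := dif_pos hj

theorem permVal_mem {m : ℕ} (π : Equiv.Perm (Fin m)) {j : ℕ} (hj : 1 ≤ j ∧ j ≤ m) :
    1 ≤ permVal π j ∧ permVal π j ≤ m := by
  rw [permVal_eq π hj]
  have := (π ⟨j - 1, by omega⟩).isLt
  omega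

theorem permVal_pext_Mmap (s : Finset (Fin n)) (hk : s.card = k) (δ : Equiv.Perm (Fin k))
    {j : ℕ} (hj : 1 ≤ j ∧ j ≤ k) :
    permVal (pext s hk δ) (Mmap s hk j) = Mmap s hk (permVal δ j) := by
  have hkn : k ≤ n := by
    have := Finset.card_le_univ s
    simpa [hk] using this
  set j0 : Fin k := ⟨j - 1, by omega⟩ with hj0
  have hM : Mmap s hk j = (s.orderEmbOfFin hk j0 : ℕ) + 1 := Mmap_eq s hk hj
  have hlt := (s.orderEmbOfFin hk j0).isLt
  have hMn : 1 ≤ Mmap s hk j ∧ Mmap s hk j ≤ n := by rw [hM]; omega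
  rw [permVal_eq _ hMn]
  have hfix : (⟨Mmap s hk j - 1, by omega⟩ : Fin n) = s.orderEmbOfFin hk j0 := by
    apply Fin.ext; simp [hM]
  rw [hfix, pext_apply_emb]
  have hδ : permVal δ j = (δ j0 : ℕ) + 1 := permVal_eq δ hj
  have hδlt := (δ j0).isLt
  rw [Mmap_eq s hk (by omega)]
  congr 2
  apply Fin.ext
  simp [hδ]

theorem permVal_pext_fixed (s : Finset (Fin n)) (hk : s.card = k) (δ : Equiv.Perm (Fin k))
    {i : ℕ} (hi : 1 ≤ i ∧ i ≤ n) (hP : ¬ Pmem s i) :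
    permVal (pext s hk δ) i = i := by
  rw [permVal_eq _ hi]
  have hx : (⟨i - 1, by omega⟩ : Fin n) ∉ s := by
    intro hmem
    exact hP ⟨⟨i - 1, by omega⟩, hmem, by simp; omega⟩
  rw [pext_apply_not_mem s hk δ hx]
  simp; omega

theorem card_filter_Pmem (s : Finset (Fin n)) (hk : s.card = k) :
    ((Finset.Icc 1 n).filter (fun i => Pmem s i)).card = k := by
  have himg : (Finset.Icc 1 n).filter (fun i => Pmem s i)
      = Finset.image (fun x : Fin n => (x : ℕ) + 1) s := by
    ext i
    rw [Finset.mem_filter, Finset.mem_Icc, Finset.mem_image]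
    simp only [Pmem]
    constructor
    · rintro ⟨_, x, hx, hxi⟩; exact ⟨x, hx, hxi⟩
    · rintro ⟨x, hx, hxi⟩
      have := x.isLt
      exact ⟨by omega, x, hx, hxi⟩
  rw [himg, Finset.card_image_of_injective _ (fun x y h => Fin.val_injective (by omega)), hk]

theorem wex_pext (s : Finset (Fin n)) (hk : s.card = k) (δ : Equiv.Perm (Fin k)) :
    wex (pext s hk δ) = (n - k) + wex δ := by
  have hkn : k ≤ n := by have := Finset.card_le_univ s; simpa [hk] using this
  have hset : (Finset.Icc 1 n).filter (fun i => i ≤ permVal (pext s hk δ) i)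
      = ((Finset.Icc 1 n).filter (fun i => ¬ Pmem s i)) ∪
        (((Finset.Icc 1 k).filter (fun j => j ≤ permVal δ j)).image (Mmap s hk)) := by
    ext i
    simp only [mem_filter, mem_union, mem_image, mem_Icc]
    constructor
    · rintro ⟨hi, hle⟩
      by_cases hP : Pmem s i
      · obtain ⟨j, hj, hMj⟩ := exists_Mmap s hk hP
        right
        refine ⟨j, ⟨⟨hj.1, hj.2⟩, ?_⟩, hMj⟩
        have h1 := permVal_pext_Mmap s hk δ hj
        rw [hMj] at h1
        have h2 : Mmap s hk j ≤ Mmap s hk (permVal δ j) := by rw [hMj, ← h1]; exact hle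
        exact (Mmap_le_iff s hk hj (permVal_mem δ hj)).1 h2
      · left; exact ⟨hi, hP⟩
    · rintro (⟨hi, hP⟩ | ⟨j, ⟨hj, hle⟩, hMj⟩)
      · exact ⟨hi, le_of_eq (permVal_pext_fixed s hk δ hi hP).symm⟩
      · subst hMj
        have hmm := Mmap_mem s hk hj
        refine ⟨⟨hmm.1, hmm.2⟩, ?_⟩
        rw [permVal_pext_Mmap s hk δ hj]
        exact (Mmap_le_iff s hk hj (permVal_mem δ hj)).2 hle
  have hdis : Disjoint ((Finset.Icc 1 n).filter (fun i => ¬ Pmem s i))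
      (((Finset.Icc 1 k).filter (fun j => j ≤ permVal δ j)).image (Mmap s hk)) := by
    rw [Finset.disjoint_left]
    rintro i hi hi'
    obtain ⟨j, hj, hMj⟩ := Finset.mem_image.1 hi'
    have hj' : 1 ≤ j ∧ j ≤ k := by
      have := Finset.mem_Icc.1 (Finset.mem_of_mem_filter j hj); omega
    have := Pmem_Mmap s hk hj'
    rw [hMj] at this
    exact (Finset.mem_filter.1 hi).2 this
  have hcard1 : ((Finset.Icc 1 n).filter (fun i => ¬ Pmem s i)).card = n - k := by
    have h1 := Finset.card_filter_add_card_filter_not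
      (s := Finset.Icc 1 n) (p := fun i => Pmem s i)
    rw [card_filter_Pmem s hk] at h1
    have h2 : (Finset.Icc 1 n).card = n := by rw [Nat.card_Icc]; omega
    omega
  have hcard2 : (((Finset.Icc 1 k).filter (fun j => j ≤ permVal δ j)).image (Mmap s hk)).card
      = wex δ := by
    rw [Finset.card_image_of_injOn, wex]
    intro j hj j' hj' h
    have hj1 : 1 ≤ j ∧ j ≤ k := by
      have := Finset.mem_Icc.1 (Finset.mem_of_mem_filter _ hj); omega
    have hj1' : 1 ≤ j' ∧ j' ≤ k := by
      have := Finset.mem_Icc.1 (Finset.mem_of_mem_filter _ hj'); omega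
    exact Mmap_inj s hk hj1 hj1' h
  rw [wex, hset, Finset.card_union_of_disjoint hdis, hcard1, hcard2]

theorem cond_iff (s : Finset (Fin n)) (hk : s.card = k) (δ : Equiv.Perm (Fin k)) {j j' : ℕ}
    (hj : 1 ≤ j ∧ j ≤ k) (hj' : 1 ≤ j' ∧ j' ≤ k) :
    ((Mmap s hk j < Mmap s hk j' ∧ Mmap s hk j' ≤ permVal (pext s hk δ) (Mmap s hk j) ∧
      permVal (pext s hk δ) (Mmap s hk j) < permVal (pext s hk δ) (Mmap s hk j')) ∨
     (permVal (pext s hk δ) (Mmap s hk j) < permVal (pext s hk δ) (Mmap s hk j') ∧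
      permVal (pext s hk δ) (Mmap s hk j') < Mmap s hk j ∧ Mmap s hk j < Mmap s hk j'))
    ↔ ((j < j' ∧ j' ≤ permVal δ j ∧ permVal δ j < permVal δ j') ∨
       (permVal δ j < permVal δ j' ∧ permVal δ j' < j ∧ j < j')) := by
  rw [permVal_pext_Mmap s hk δ hj, permVal_pext_Mmap s hk δ hj',
    Mmap_lt_iff s hk hj hj', Mmap_le_iff s hk hj' (permVal_mem δ hj),
    Mmap_lt_iff s hk (permVal_mem δ hj) (permVal_mem δ hj'),
    Mmap_lt_iff s hk (permVal_mem δ hj') hj]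

theorem cr_pext (s : Finset (Fin n)) (hk : s.card = k) (δ : Equiv.Perm (Fin k)) :
    cr (pext s hk δ) = cr δ := by
  have hset : (((Finset.Icc 1 n) ×ˢ (Finset.Icc 1 n)).filter fun p =>
      (p.1 < p.2 ∧ p.2 ≤ permVal (pext s hk δ) p.1 ∧
        permVal (pext s hk δ) p.1 < permVal (pext s hk δ) p.2) ∨
      (permVal (pext s hk δ) p.1 < permVal (pext s hk δ) p.2 ∧
        permVal (pext s hk δ) p.2 < p.1 ∧ p.1 < p.2))
      = ((((Finset.Icc 1 k) ×ˢ (Finset.Icc 1 k)).filter fun p =>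
          (p.1 < p.2 ∧ p.2 ≤ permVal δ p.1 ∧ permVal δ p.1 < permVal δ p.2) ∨
          (permVal δ p.1 < permVal δ p.2 ∧ permVal δ p.2 < p.1 ∧ p.1 < p.2))).image
          (Prod.map (Mmap s hk) (Mmap s hk)) := by
    ext ⟨i, i'⟩
    simp only [Finset.mem_filter, Finset.mem_image, Finset.mem_product, Finset.mem_Icc,
      Prod.exists, Prod.map_apply, Prod.mk.injEq]
    constructor
    · rintro ⟨⟨hi, hi'⟩, hcond⟩
      have hPi : Pmem s i := by
        by_contra hP
        have hfix := permVal_pext_fixed s hk δ hi hP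
        rcases hcond with ⟨h1, h2, h3⟩ | ⟨h1, h2, h3⟩ <;> omega
      have hPi' : Pmem s i' := by
        by_contra hP
        have hfix := permVal_pext_fixed s hk δ hi' hP
        rcases hcond with ⟨h1, h2, h3⟩ | ⟨h1, h2, h3⟩ <;> omega
      obtain ⟨j, hj, hMj⟩ := exists_Mmap s hk hPi
      obtain ⟨j', hj', hMj'⟩ := exists_Mmap s hk hPi'
      refine ⟨j, j', ⟨⟨⟨hj.1, hj.2⟩, ⟨hj'.1, hj'.2⟩⟩, ?_⟩, hMj, hMj'⟩
      rw [← hMj, ← hMj'] at hcond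
      exact (cond_iff s hk δ hj hj').1 hcond
    · rintro ⟨j, j', ⟨⟨hj, hj'⟩, hcond⟩, hMj, hMj'⟩
      subst hMj hMj'
      have h1 := Mmap_mem s hk hj
      have h2 := Mmap_mem s hk hj'
      exact ⟨⟨⟨h1.1, h1.2⟩, ⟨h2.1, h2.2⟩⟩, (cond_iff s hk δ hj hj').2 hcond⟩
  rw [cr, hset, Finset.card_image_of_injOn, cr]
  rintro ⟨j, j'⟩ hj ⟨l, l'⟩ hl h
  have hjm := Finset.mem_product.1 (Finset.mem_of_mem_filter _ hj)
  have hlm := Finset.mem_product.1 (Finset.mem_of_mem_filter _ hl)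
  simp only [Finset.mem_Icc] at hjm hlm
  simp only [Prod.map_apply, Prod.mk.injEq] at h
  have e1 := Mmap_inj s hk hjm.1 hlm.1 h.1
  have e2 := Mmap_inj s hk hjm.2 hlm.2 h.2
  simp [e1, e2]

theorem fixc_pext (s : Finset (Fin n)) (hk : s.card = k) (δ : Equiv.Perm (Fin k))
    (hder : ∀ x, δ x ≠ x) :
    (Finset.univ.filter fun i => pext s hk δ i ≠ i) = s := by
  ext x
  simp only [Finset.mem_filter, Finset.mem_univ, true_and]
  constructor
  · intro hne
    by_contra hx
    exact hne (pext_apply_not_mem s hk δ hx)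
  · intro hx
    set j0 := (s.orderIsoOfFin hk).symm ⟨x, hx⟩ with hj0
    have hxe : x = s.orderEmbOfFin hk j0 := by
      rw [← Finset.coe_orderIsoOfFin_apply, hj0, OrderIso.apply_symm_apply]
    rw [hxe, pext_apply_emb]
    intro h
    have : δ j0 = j0 := (s.orderEmbOfFin hk).injective h
    exact hder j0 this

theorem sum_fiber_eq (s : Finset (Fin n)) {R : Type*} [CommRing R] (y q : R) :
    ∑ σ ∈ Finset.univ.filter
        (fun σ : Equiv.Perm (Fin n) => (Finset.univ.filter fun i => σ i ≠ i) = s),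
      y ^ wex σ * q ^ cr σ
    = y ^ (n - s.card) * Bpoly s.card y q := by
  rw [Bpoly, Finset.mul_sum]
  refine (Finset.sum_bij (fun δ _ => pext s rfl δ) ?_ ?_ ?_ ?_).symm
  · intro δ hδ
    simp only [Finset.mem_filter, Finset.mem_univ, true_and] at hδ ⊢
    exact fixc_pext s rfl δ hδ
  · intro δ hδ δ' hδ' h
    have h' : pext s rfl δ = pext s rfl δ' := h
    apply Equiv.ext
    intro j0
    have h1 : pext s rfl δ (s.orderEmbOfFin rfl j0) = pext s rfl δ' (s.orderEmbOfFin rfl j0) := by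
      rw [h']
    rw [pext_apply_emb, pext_apply_emb] at h1
    exact (s.orderEmbOfFin rfl).injective h1
  · intro σ hσ
    simp only [Finset.mem_filter, Finset.mem_univ, true_and] at hσ
    have hmem : ∀ x : Fin n, x ∈ s ↔ σ x ∈ s := by
      intro x
      rw [← hσ]
      simp only [Finset.mem_filter, Finset.mem_univ, true_and]
      constructor
      · intro hne h; exact hne (σ.injective h)
      · intro hne h; exact hne (congrArg σ h)
    set δ := ((s.orderIsoOfFin rfl).toEquiv.symm).permCongr (σ.subtypePerm (fun x => (hmem x).symm)) with hδdef
    have hδapp : ∀ z : Fin s.card, δ z =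
        (s.orderIsoOfFin rfl).symm ⟨σ (s.orderEmbOfFin rfl z), by
          rw [← hmem]; exact s.orderEmbOfFin_mem rfl z⟩ := by
      intro z
      rfl
    have hder : ∀ z, δ z ≠ z := by
      intro z h
      rw [hδapp z] at h
      have := congrArg (s.orderIsoOfFin rfl) h
      rw [OrderIso.apply_symm_apply] at this
      have h2 : σ (s.orderEmbOfFin rfl z) = (s.orderEmbOfFin rfl z : Fin n) := by
        have := congrArg (Subtype.val) this
        simpa [Finset.coe_orderIsoOfFin_apply] using this
      have hmem2 : (s.orderEmbOfFin rfl z : Fin n) ∈ s := s.orderEmbOfFin_mem rfl z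
      have hmem3 := (Finset.ext_iff.1 hσ ((s.orderEmbOfFin rfl) z)).2 hmem2
      simp only [Finset.mem_filter, Finset.mem_univ, true_and] at hmem3
      exact hmem3 h2
    refine ⟨δ, by simp only [Finset.mem_filter, Finset.mem_univ, true_and]; exact hder, ?_⟩
    apply Equiv.ext
    intro x
    by_cases hx : x ∈ s
    · set z := (s.orderIsoOfFin rfl).symm ⟨x, hx⟩ with hz
      have hxe : x = s.orderEmbOfFin rfl z := by
        rw [← Finset.coe_orderIsoOfFin_apply, hz, OrderIso.apply_symm_apply]
      rw [hxe, pext_apply_emb, hδapp z]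
      rw [← Finset.coe_orderIsoOfFin_apply, OrderIso.apply_symm_apply]
    · rw [pext_apply_not_mem s rfl δ hx]
      have : x ∉ Finset.univ.filter fun i => σ i ≠ i := by rw [hσ]; exact hx
      simp only [Finset.mem_filter, Finset.mem_univ, true_and, not_not] at this
      exact this.symm
  · intro δ hδ
    rw [wex_pext s rfl δ, cr_pext s rfl δ, pow_add]
    ring

theorem Apoly_eq (n : ℕ) {R : Type*} [CommRing R] (y q : R) :
    Apoly n y q = ∑ j ∈ Finset.range (n + 1),
      (n.choose j : R) * y ^ (n - j) * Bpoly j y q := by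
  rw [Apoly, ← Finset.sum_fiberwise (Finset.univ : Finset (Equiv.Perm (Fin n)))
    (fun σ => Finset.univ.filter fun i => σ i ≠ i) (fun σ => y ^ wex σ * q ^ cr σ)]
  rw [Finset.sum_congr rfl fun s _ => sum_fiber_eq s y q]
  have h2 : (Finset.univ : Finset (Finset (Fin n))) = (Finset.univ : Finset (Fin n)).powerset :=
    (Finset.powerset_univ).symm
  have hcard : (Finset.univ : Finset (Fin n)).card = n := by simp
  rw [h2, Finset.sum_powerset, hcard]
  refine Finset.sum_congr rfl fun j hj => ?_
  rw [Finset.sum_congr rfl (fun t ht => by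
      rw [show t.card = j from (Finset.mem_powersetCard.1 ht).2]),
    Finset.sum_const, Finset.card_powersetCard, hcard, nsmul_eq_mul]
  ring

theorem alt_sum (j n : ℕ) (hj : j ≤ n) :
    ∑ k ∈ Finset.Icc j n, ((-1 : ℤ) ^ (n - k) * (n.choose k) * (k.choose j))
      = if j = n then 1 else 0 := by
  rw [← Finset.Ico_add_one_right_eq_Icc, Finset.sum_Ico_eq_sum_range]
  have hd : n + 1 - j = (n - j) + 1 := by omega
  rw [hd]
  set d := n - j with hdd
  have h1 : ∀ m ∈ Finset.range (d + 1),
      ((-1 : ℤ) ^ (n - (j + m)) * (n.choose (j + m)) * ((j + m).choose j))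
      = (n.choose j : ℤ) * ((-1 : ℤ) ^ d * ((-1 : ℤ) ^ m * (d.choose m))) := by
    intro m hm
    have hm' : m ≤ d := by have := Finset.mem_range.1 hm; omega
    have hc : n.choose (j + m) * (j + m).choose j = n.choose j * d.choose m := by
      have := Nat.choose_mul (n := n) (show j ≤ j + m by omega)
      simpa [hdd] using this
    have e1 : (-1 : ℤ) ^ d = (-1 : ℤ) ^ (d - m) * (-1 : ℤ) ^ m := by
      rw [← pow_add]; congr 1; omega
    have e2 : ((-1 : ℤ) ^ m) * ((-1 : ℤ) ^ m) = 1 := by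
      rw [← pow_add, ← two_mul, pow_mul]; norm_num
    have hsgn : ((-1 : ℤ) ^ (n - (j + m))) = (-1 : ℤ) ^ d * (-1 : ℤ) ^ m := by
      have h2 : n - (j + m) = d - m := by omega
      calc ((-1 : ℤ) ^ (n - (j + m))) = (-1 : ℤ) ^ (d - m) := by rw [h2]
        _ = (-1 : ℤ) ^ (d - m) * (((-1 : ℤ) ^ m) * ((-1 : ℤ) ^ m)) := by rw [e2, mul_one]
        _ = (-1 : ℤ) ^ d * (-1 : ℤ) ^ m := by rw [e1]; ring
    rw [hsgn]
    have hc' : ((n.choose (j + m) : ℤ)) * ((j + m).choose j) = (n.choose j : ℤ) * (d.choose m) := by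
      exact_mod_cast congrArg (fun x : ℕ => (x : ℤ)) hc
    calc (-1 : ℤ) ^ d * (-1 : ℤ) ^ m * (n.choose (j + m)) * ((j + m).choose j)
        = (-1 : ℤ) ^ d * (-1 : ℤ) ^ m * ((n.choose (j + m) : ℤ) * ((j + m).choose j)) := by ring
      _ = (-1 : ℤ) ^ d * (-1 : ℤ) ^ m * ((n.choose j : ℤ) * (d.choose m)) := by rw [hc']
      _ = (n.choose j : ℤ) * ((-1 : ℤ) ^ d * ((-1 : ℤ) ^ m * (d.choose m))) := by ring
  rw [Finset.sum_congr rfl h1, ← Finset.mul_sum, ← Finset.mul_sum,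
    Int.alternating_sum_range_choose]
  by_cases hdn : d = 0
  · have hjn : j = n := by omega
    simp [hdn, hjn]
  · have hjn : j ≠ n := by omega
    simp [hdn, hjn]

theorem inv_key {R : Type*} [CommRing R] (y : R) (n j : ℕ) (hj : j ≤ n) :
    ∑ k ∈ Finset.range (n + 1),
      (n.choose k : R) * (-y) ^ (n - k) * ((k.choose j : R) * y ^ (k - j))
      = if j = n then 1 else 0 := by
  have hsub : Finset.Icc j n ⊆ Finset.range (n + 1) := by
    intro k hk
    have := Finset.mem_Icc.1 hk
    exact Finset.mem_range.2 (by omega)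
  rw [← Finset.sum_subset hsub (fun k hk hk' => ?_)]
  · have h1 : ∀ k ∈ Finset.Icc j n,
        (n.choose k : R) * (-y) ^ (n - k) * ((k.choose j : R) * y ^ (k - j))
        = (((-1 : ℤ) ^ (n - k) * (n.choose k) * (k.choose j) : ℤ) : R) * y ^ (n - j) := by
      intro k hk
      have hk' := Finset.mem_Icc.1 hk
      have hy : (-y) ^ (n - k) = (-1 : R) ^ (n - k) * y ^ (n - k) := by
        rw [neg_pow]
      have hyy : y ^ (n - k) * y ^ (k - j) = y ^ (n - j) := by
        rw [← pow_add]; congr 1; omega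
      push_cast
      rw [hy]
      calc (n.choose k : R) * ((-1 : R) ^ (n - k) * y ^ (n - k)) * ((k.choose j : R) * y ^ (k - j))
          = (-1 : R) ^ (n - k) * (n.choose k) * (k.choose j) * (y ^ (n - k) * y ^ (k - j)) := by
            ring
        _ = (-1 : R) ^ (n - k) * (n.choose k) * (k.choose j) * y ^ (n - j) := by rw [hyy]
    rw [Finset.sum_congr rfl h1, ← Finset.sum_mul, ← Int.cast_sum, alt_sum j n hj]
    by_cases hjn : j = n
    · simp [hjn]
    · simp [hjn]
  · have hkj : k < j := by
      have h2 := Finset.mem_range.1 hk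
      have h3 := Finset.mem_Icc.not.1 hk'
      omega
    rw [Nat.choose_eq_zero_of_lt hkj]
    push_cast
    ring

end Stmt3Aux

theorem stmt3 (n : ℕ) {R : Type*} [CommRing R] (y q : R) :
    Bpoly n y q = ∑ k ∈ Finset.range (n+1),
      (n.choose k : R) * (-y) ^ (n - k) * Apoly k y q := by
  symm
  calc ∑ k ∈ Finset.range (n+1), (n.choose k : R) * (-y) ^ (n - k) * Apoly k y q
      = ∑ k ∈ Finset.range (n+1), ∑ j ∈ Finset.range (n+1),
          (n.choose k : R) * (-y) ^ (n - k) * ((k.choose j : R) * y ^ (k - j) * Bpoly j y q) := by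
        refine Finset.sum_congr rfl fun k hk => ?_
        rw [Stmt3Aux.Apoly_eq k y q, Finset.mul_sum]
        refine Finset.sum_subset
          (Finset.range_subset_range.2 (by have := Finset.mem_range.1 hk; omega)) ?_
        intro j hj hj'
        have hkj : k < j := by
          have h1 := Finset.mem_range.not.1 hj'
          have h2 := Finset.mem_range.1 hj
          omega
        rw [Nat.choose_eq_zero_of_lt hkj]
        push_cast; ring
    _ = ∑ j ∈ Finset.range (n+1),
          (∑ k ∈ Finset.range (n+1), (n.choose k : R) * (-y) ^ (n - k) *
            ((k.choose j : R) * y ^ (k - j))) * Bpoly j y q := by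
        rw [Finset.sum_comm]
        refine Finset.sum_congr rfl fun j hj => ?_
        rw [Finset.sum_mul]
        exact Finset.sum_congr rfl fun k hk => by ring
    _ = ∑ j ∈ Finset.range (n+1), (if j = n then (1:R) else 0) * Bpoly j y q := by
        refine Finset.sum_congr rfl fun j hj => ?_
        rw [Stmt3Aux.inv_key y n j (by have := Finset.mem_range.1 hj; omega)]
    _ = Bpoly n y q := by
        rw [Finset.sum_congr rfl (fun j _ => by rw [ite_mul, one_mul, zero_mul])]
        rw [Finset.sum_ite_eq' (Finset.range (n+1)) n (fun j => Bpoly j y q)]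
        simp
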